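/- For every even integer m = 2k + 4 ≥ 6, the pentagon Δ with vertices (0,0), (m−4,0), (m,1), (m−2,m), (m−3,m−1) has normalized volume m² and exactly m boundary lattice points; consequently vol(Δ) − m² = 0 and ½(vol(Δ) − |∂Δ∩ℤ²| + m − m²) + 1 = 1. -/

import Mathlib

/-- Twice the signed area of the polygon with the given (cyclically ordered) list
of vertices, in absolute value: the normalized volume (shoelace formula). -/
def normVol (l : List (ℤ × ℤ)) : ℤ :=
  |(((l.zip (l.rotate 1)).map fun e => e.1.1 * e.2.2 - e.2.1 * e.1.2).sum)|

/-- The number of lattice points on the boundary of the polygon with the given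
(cyclically ordered) list of vertices: the sum over the edges of the gcd of the
coordinate differences of the endpoints. -/
def boundaryPts (l : List (ℤ × ℤ)) : ℤ :=
  ((l.zip (l.rotate 1)).map fun e => (Int.gcd (e.2.1 - e.1.1) (e.2.2 - e.1.2) : ℤ)).sum

/-- For every even m = 2k + 4 ≥ 6 the pentagon with vertices
(0,0), (m−4,0), (m,1), (m−2,m), (m−3,m−1) has normalized volume m² and m
boundary lattice points; consequently vol(Δ) − m² = 0 and the genus formula
evaluates to 1. -/
theorem pentagon_v_vol_boundary (k : ℤ) (hk : 1 ≤ k) (m : ℤ) (hm : m = 2 * k + 4) :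
    normVol [((0:ℤ), (0:ℤ)), (m - 4, 0), (m, 1), (m - 2, m), (m - 3, m - 1)] = m ^ 2 ∧
    boundaryPts [((0:ℤ), (0:ℤ)), (m - 4, 0), (m, 1), (m - 2, m), (m - 3, m - 1)] = m ∧
    normVol [((0:ℤ), (0:ℤ)), (m - 4, 0), (m, 1), (m - 2, m), (m - 3, m - 1)] - m ^ 2 = 0 ∧
    ((normVol [((0:ℤ), (0:ℤ)), (m - 4, 0), (m, 1), (m - 2, m), (m - 3, m - 1)] : ℚ)
      - (boundaryPts [((0:ℤ), (0:ℤ)), (m - 4, 0), (m, 1), (m - 2, m), (m - 3, m - 1)] : ℚ)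
      + (m : ℚ) - (m : ℚ) ^ 2) / 2 + 1 = 1 := by
  subst hm
  have h1 : normVol [((0:ℤ), (0:ℤ)), (2*k+4 - 4, 0), (2*k+4, 1), (2*k+4 - 2, 2*k+4),
      (2*k+4 - 3, 2*k+4 - 1)] = (2*k+4) ^ 2 := by
    simp only [normVol, List.rotate, List.zip, List.zipWith, List.map, List.sum, List.foldr, List.length_cons, List.length_nil, List.splitAt_eq, List.take, List.drop, List.cons_append, List.nil_append]
    rw [abs_of_nonneg (by nlinarith)]
    ring
  have g1 : (Int.gcd (2*k+4 - 4 - 0) (0 - 0) : ℤ) = 2*k := by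
    simp [Int.gcd_zero_right]
    omega
  have g2 : (Int.gcd (2*k+4 - (2*k+4-4)) (1 - 0) : ℤ) = 1 := by
    have : IsCoprime (2*k+4 - (2*k+4-4)) (1 - 0 : ℤ) := ⟨0, 1, by ring⟩
    exact_mod_cast congrArg (Nat.cast : ℕ → ℤ) (Int.isCoprime_iff_gcd_eq_one.mp this)
  have g3 : (Int.gcd (2*k+4-2 - (2*k+4)) (2*k+4 - 1) : ℤ) = 1 := by
    have : IsCoprime (2*k+4-2 - (2*k+4)) (2*k+4 - 1 : ℤ) := ⟨k+1, 1, by ring⟩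
    exact_mod_cast congrArg (Nat.cast : ℕ → ℤ) (Int.isCoprime_iff_gcd_eq_one.mp this)
  have g4 : (Int.gcd (2*k+4-3 - (2*k+4-2)) (2*k+4-1 - (2*k+4)) : ℤ) = 1 := by
    have : IsCoprime (2*k+4-3 - (2*k+4-2)) (2*k+4-1 - (2*k+4) : ℤ) := ⟨-1, 0, by ring⟩
    exact_mod_cast congrArg (Nat.cast : ℕ → ℤ) (Int.isCoprime_iff_gcd_eq_one.mp this)
  have g5 : (Int.gcd (0 - (2*k+4-3)) (0 - (2*k+4-1)) : ℤ) = 1 := by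
    have : IsCoprime (0 - (2*k+4-3)) (0 - (2*k+4-1) : ℤ) := ⟨k+2, -(k+1), by ring⟩
    exact_mod_cast congrArg (Nat.cast : ℕ → ℤ) (Int.isCoprime_iff_gcd_eq_one.mp this)
  have h2 : boundaryPts [((0:ℤ), (0:ℤ)), (2*k+4 - 4, 0), (2*k+4, 1), (2*k+4 - 2, 2*k+4),
      (2*k+4 - 3, 2*k+4 - 1)] = 2*k+4 := by
    simp only [boundaryPts, List.rotate, List.zip, List.zipWith, List.map, List.sum, List.foldr, List.length_cons, List.length_nil, List.splitAt_eq, List.take, List.drop, List.cons_append, List.nil_append]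
    rw [g1, g2, g3, g4, g5]
    ring
  refine ⟨h1, h2, by rw [h1]; ring, ?_⟩
  rw [h1, h2]
  push_cast
  ring
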